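/- With e_{i1}(m1,n1) = multiplication by x_i(m1,n1) and e_{11}(m2,n2) = μ δ_{(m2,n2),(0,0)} − Σ_{j=2}^l Σ_{(m,n)} q^{n m2} x_j(m2+m, n2+n) ∂/∂x_j(m,n), one has [e_{i1}(m1,n1), e_{11}(m2,n2)] = q^{n1 m2} e_{i1}(m1+m2, n1+n2) for all 2 ≤ i ≤ l and m1,n1,m2,n2 ∈ Z. -/

import Mathlib

open MvPolynomial

/-- Index set `{2, …, l}` for the variables. -/
abbrev Idx (l : ℕ) := {i : ℕ // 2 ≤ i ∧ i ≤ l}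

/-- The polynomial ring `V = ℂ[x_i(m,n) : 2 ≤ i ≤ l, (m,n) ∈ ℤ²]`. -/
abbrev V (l : ℕ) := MvPolynomial (Idx l × ℤ × ℤ) ℂ

/-- `e_{ij}(m1,n1) = Σ_{(m,n)} q^{m n1} x_i(m1+m, n1+n) ∂/∂x_j(m,n)`, for `2 ≤ i,j ≤ l`. -/
noncomputable def eGen (l : ℕ) (q : ℂ) (i j : Idx l) (m1 n1 : ℤ) (p : V l) : V l :=
  ∑ᶠ mn : ℤ × ℤ,
    q ^ (mn.1 * n1) • (X (i, m1 + mn.1, n1 + mn.2) * pderiv (j, mn.1, mn.2) p)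

/-- `e_{i1}(m,n)` = multiplication by the variable `x_i(m,n)`. -/
noncomputable def eLow (l : ℕ) (i : Idx l) (m n : ℤ) (p : V l) : V l :=
  X (i, m, n) * p

/-- `e_{11}(m1,n1) = μ δ_{(m1,n1),(0,0)} − Σ_{j=2}^l Σ_{(m,n)} q^{n m1} x_j(m1+m, n1+n) ∂/∂x_j(m,n)`. -/
noncomputable def e11 (l : ℕ) (q μ : ℂ) (m1 n1 : ℤ) (p : V l) : V l :=
  (if (m1, n1) = ((0 : ℤ), (0 : ℤ)) then μ else 0) • p
  - ∑ᶠ j : Idx l, ∑ᶠ mn : ℤ × ℤ,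
      q ^ (mn.2 * m1) • (X (j, m1 + mn.1, n1 + mn.2) * pderiv (j, mn.1, mn.2) p)

/-- `e_{1i}(m1,n1) = q^{−m1 n1} μ ∂/∂x_i(−m1,−n1)
  − Σ_{j=2}^l Σ_{(m,n),(m',n')} q^{n1 m' + n m1 + n m'}
      x_j(m1+m+m', n1+n+n') ∂/∂x_j(m,n) ∂/∂x_i(m',n')`, for `2 ≤ i ≤ l`. -/
noncomputable def eUp (l : ℕ) (q μ : ℂ) (i : Idx l) (m1 n1 : ℤ) (p : V l) : V l :=
  q ^ (-(m1 * n1)) • μ • pderiv (i, -m1, -n1) p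
  - ∑ᶠ j : Idx l, ∑ᶠ mm : (ℤ × ℤ) × (ℤ × ℤ),
      q ^ (n1 * mm.2.1 + mm.1.2 * m1 + mm.1.2 * mm.2.1) •
        (X (j, m1 + mm.1.1 + mm.2.1, n1 + mm.1.2 + mm.2.2) *
          pderiv (j, mm.1.1, mm.1.2) (pderiv (i, mm.2.1, mm.2.2) p))

/-- Degree operator `D1 = Σ_{i=2}^l Σ_{(m,n)} m · x_i(m,n) ∂/∂x_i(m,n)`. -/
noncomputable def D1 (l : ℕ) (p : V l) : V l :=
  ∑ᶠ i : Idx l, ∑ᶠ mn : ℤ × ℤ,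
    (mn.1 : ℂ) • (X (i, mn.1, mn.2) * pderiv (i, mn.1, mn.2) p)

/-- Degree operator `D2 = Σ_{i=2}^l Σ_{(m,n)} n · x_i(m,n) ∂/∂x_i(m,n)`. -/
noncomputable def D2 (l : ℕ) (p : V l) : V l :=
  ∑ᶠ i : Idx l, ∑ᶠ mn : ℤ × ℤ,
    (mn.2 : ℂ) • (X (i, mn.1, mn.2) * pderiv (i, mn.1, mn.2) p)

/-- Commutator `[A,B] = A∘B − B∘A` of operators on `V`. -/
noncomputable def oComm {l : ℕ} (A B : V l → V l) : V l → V l := fun p => A (B p) - B (A p)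


lemma pd_support_fin (l : ℕ) (j : Idx l) (p : V l) :
    (Function.support fun mn : ℤ × ℤ => pderiv (j, mn.1, mn.2) p).Finite := by
  apply Set.Finite.subset (Set.Finite.preimage
    (f := fun mn : ℤ × ℤ => ((j, mn.1, mn.2) : Idx l × ℤ × ℤ))
    (Set.injOn_of_injective (fun a b h => by
      simpa [Prod.ext_iff] using h)) (p.vars.finite_toSet))
  intro mn hmn
  simp only [Set.mem_preimage, Finset.mem_coe]
  by_contra h
  exact hmn (pderiv_eq_zero_of_notMem_vars h)

lemma term_support_fin (l : ℕ) (j : Idx l) (p : V l) (c : ℤ × ℤ → ℂ) (g : ℤ × ℤ → Idx l × ℤ × ℤ) :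
    (Function.support fun mn : ℤ × ℤ => c mn • (X (g mn) * pderiv (j, mn.1, mn.2) p : V l)).Finite := by
  apply Set.Finite.subset (pd_support_fin l j p)
  intro mn hmn
  simp only [Function.mem_support] at hmn ⊢
  intro h
  apply hmn
  rw [h, mul_zero, smul_zero]

lemma S_mul (l : ℕ) (q : ℂ) (m2 n2 m1 n1 : ℤ) (i j : Idx l) (p : V l) :
    (∑ᶠ mn : ℤ × ℤ, q ^ (mn.2 * m2) • (X (j, m2 + mn.1, n2 + mn.2) * pderiv (j, mn.1, mn.2) (X (i, m1, n1) * p)))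
    = X (i, m1, n1) * (∑ᶠ mn : ℤ × ℤ, q ^ (mn.2 * m2) • (X (j, m2 + mn.1, n2 + mn.2) * pderiv (j, mn.1, mn.2) p))
      + (if j = i then q ^ (n1 * m2) • (X (i, m2 + m1, n2 + n1) * p) else 0) := by
  classical
  have hpd : ∀ mn : ℤ × ℤ, pderiv (j, mn.1, mn.2) (X (i, m1, n1) * p)
      = (if (j, mn.1, mn.2) = ((i, m1, n1) : Idx l × ℤ × ℤ) then p else 0)
        + X (i, m1, n1) * pderiv (j, mn.1, mn.2) p := by
    intro mn
    by_cases h : ((j, mn.1, mn.2) : Idx l × ℤ × ℤ) = (i, m1, n1)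
    · rw [pderiv_mul, if_pos h, h, pderiv_X_self, one_mul]
    · rw [pderiv_mul, if_neg h, pderiv_X_of_ne (Ne.symm h), zero_mul]
  have hsum : ∀ mn : ℤ × ℤ,
      q ^ (mn.2 * m2) • (X (j, m2 + mn.1, n2 + mn.2) * pderiv (j, mn.1, mn.2) (X (i, m1, n1) * p))
      = X (i, m1, n1) * (q ^ (mn.2 * m2) • (X (j, m2 + mn.1, n2 + mn.2) * pderiv (j, mn.1, mn.2) p))
        + (if ((j, mn.1, mn.2) : Idx l × ℤ × ℤ) = (i, m1, n1) then
            q ^ (mn.2 * m2) • (X (j, m2 + mn.1, n2 + mn.2) * p) else 0) := by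
    intro mn
    rw [hpd]
    split_ifs with h
    · rw [mul_add, smul_add, mul_smul_comm, add_comm]
      ring_nf
    · rw [add_zero, zero_add, mul_smul_comm]
      ring_nf
  rw [finsum_congr hsum, finsum_add_distrib]
  · congr 1
    · exact (mul_finsum' _ _ (term_support_fin l j p _ _)).symm
    · by_cases hji : j = i
      · subst hji
        rw [if_pos rfl, finsum_eq_single _ ((m1, n1) : ℤ × ℤ)]
        · simp [mul_comm m1 n1]
        · intro mn hmn
          rw [if_neg]
          simp only [Prod.ext_iff, not_and]
          intro _ h1 h2
          exact hmn (by rw [Prod.ext_iff]; exact ⟨h1, h2⟩)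
      · rw [if_neg hji, finsum_eq_zero_of_forall_eq_zero]
        intro mn
        rw [if_neg (by simp [Prod.ext_iff, hji])]
  · apply Set.Finite.subset (term_support_fin l j p (fun mn => q ^ (mn.2 * m2))
      (fun mn => (j, m2 + mn.1, n2 + mn.2)))
    intro mn hmn
    simp only [Function.mem_support] at hmn ⊢
    intro h
    exact hmn (by rw [h, mul_zero])
  · apply Set.Finite.subset (Set.finite_singleton ((m1, n1) : ℤ × ℤ))
    intro mn hmn
    simp only [Function.mem_support] at hmn
    simp only [Set.mem_singleton_iff]
    by_contra h
    apply hmn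
    rw [if_neg]
    simp only [Prod.ext_iff, not_and]
    intro _ h1 h2
    exact h (by rw [Prod.ext_iff]; exact ⟨h1, h2⟩)

lemma S_support_fin (l : ℕ) (q : ℂ) (m2 n2 : ℤ) (p : V l) :
    (Function.support fun j : Idx l =>
      ∑ᶠ mn : ℤ × ℤ, q ^ (mn.2 * m2) • (X (j, m2 + mn.1, n2 + mn.2) * pderiv (j, mn.1, mn.2) p)).Finite := by
  apply Set.Finite.subset ((p.vars.finite_toSet).image Prod.fst)
  intro j hj
  simp only [Function.mem_support] at hj
  by_contra h
  apply hj
  apply finsum_eq_zero_of_forall_eq_zero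
  intro mn
  rw [pderiv_eq_zero_of_notMem_vars, mul_zero, smul_zero]
  intro hv
  exact h ⟨(j, mn.1, mn.2), hv, rfl⟩

theorem stmt5 (l : ℕ) (hl : 2 ≤ l) (q μ : ℂ) (hq : q ≠ 0)
    (i : Idx l) (m1 n1 m2 n2 : ℤ) :
    oComm (eLow l i m1 n1) (e11 l q μ m2 n2) = fun p =>
      q ^ (n1 * m2) • eLow l i (m1 + m2) (n1 + n2) p := by
  classical
  funext p
  simp only [oComm, eLow, e11]
  rw [finsum_congr (fun j => S_mul l q m2 n2 m1 n1 i j p)]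
  rw [finsum_add_distrib]
  · rw [← mul_finsum' _ _ (S_support_fin l q m2 n2 p)]
    rw [finsum_eq_single _ i (fun j hj => if_neg hj), if_pos rfl]
    rw [mul_sub, mul_smul_comm, add_comm m2 m1, add_comm n2 n1]
    abel
  · apply Set.Finite.subset (S_support_fin l q m2 n2 p)
    intro j hj
    simp only [Function.mem_support] at hj ⊢
    intro h
    exact hj (by rw [h, mul_zero])
  · apply Set.Finite.subset (Set.finite_singleton i)
    intro j hj
    simp only [Function.mem_support] at hj
    simp only [Set.mem_singleton_iff]
    by_contra h
    exact hj (if_neg h)
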